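/- Suppose 𝒯 and 𝒰 are multisets of n-th roots of unity with |𝒯| = |𝒰|, and the multisets {Σ_{φ∈𝒯} φ^r : 1 ≤ r ≤ n} and {Σ_{ψ∈𝒰} ψ^r : 1 ≤ r ≤ n} are equal. Then the lcm m_𝒯 of the orders of the elements of 𝒯 equals the lcm m_𝒰 of the orders of the elements of 𝒰; moreover the multiset {Σ_{φ∈𝒯} φ^r : 1 ≤ r ≤ n} consists of n/m_𝒯 copies of {Σ_{φ∈𝒯} φ^r : 1 ≤ r ≤ m_𝒯}. -/

import Mathlib

/-- A complex number of norm 1 with real part 1 equals 1. -/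
lemma aux_eq_one_of_re (w : ℂ) (h1 : ‖w‖ = 1) (h2 : w.re = 1) : w = 1 := by
  have habs : ‖w‖ = 1 := h1
  have hsq : w.re ^ 2 + w.im ^ 2 = 1 := by
    have := Complex.sq_norm w
    rw [habs] at this
    simpa [Complex.normSq_apply, sq] using this.symm
  have him : w.im = 0 := by nlinarith
  exact Complex.ext (by simp [h2]) (by simp [him])

/-- If a multiset of unit-norm complex numbers sums to its cardinality,
all its elements are 1. -/
lemma aux_all_one (S : Multiset ℂ) (hS : ∀ w ∈ S, ‖w‖ = 1)
    (hsum : S.sum = (Multiset.card S : ℂ)) : ∀ w ∈ S, w = 1 := by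
  intro w hw
  set S' := S.erase w with hS'
  have hcons : w ::ₘ S' = S := Multiset.cons_erase hw
  have hsum' : w + S'.sum = (Multiset.card S : ℂ) := by
    rw [← hsum, ← hcons, Multiset.sum_cons]
  have hcard : Multiset.card S = Multiset.card S' + 1 := by
    rw [← hcons, Multiset.card_cons]
  have hrw : S'.sum.re = (S'.map Complex.re).sum := map_multiset_sum Complex.reAddGroupHom S'
  have hre : w.re + (S'.map Complex.re).sum = (Multiset.card S' : ℝ) + 1 := by
    have := congrArg Complex.re hsum'
    rw [← hrw]
    simpa [hcard] using this
  have hle : (S'.map Complex.re).sum ≤ (Multiset.card S' : ℝ) := by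
    have : (S'.map Complex.re).sum ≤ (S'.map (fun _ => (1:ℝ))).sum := by
      apply Multiset.sum_map_le_sum_map
      intro x hx
      have hx' : x ∈ S := by rw [← hcons]; exact Multiset.mem_cons_of_mem hx
      calc x.re ≤ ‖x‖ := Complex.re_le_norm x
        _ = 1 := hS x hx'
    simpa [Multiset.map_const', Multiset.sum_replicate] using this
  have hwre : w.re = 1 := by
    have hwle : w.re ≤ 1 := by
      calc w.re ≤ ‖w‖ := Complex.re_le_norm w
        _ = 1 := hS w hw
    linarith
  exact aux_eq_one_of_re w (hS w hw) hwre

/-- Power sum equals cardinality iff all r-th powers are 1. -/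
lemma aux_sum_eq_card_iff (n : ℕ) (hn : 0 < n) (T : Multiset ℂ)
    (hT : ∀ z ∈ T, z ^ n = 1) (r : ℕ) :
    (T.map (· ^ r)).sum = (Multiset.card T : ℂ) ↔ ∀ z ∈ T, z ^ r = 1 := by
  constructor
  · intro hs z hz
    have h1 : ∀ w ∈ T.map (· ^ r), ‖w‖ = 1 := by
      intro w hw
      obtain ⟨x, hx, rfl⟩ := Multiset.mem_map.mp hw
      rw [norm_pow, Complex.norm_eq_one_of_pow_eq_one (hT x hx) hn.ne', one_pow]
    have := aux_all_one (T.map (· ^ r)) h1 (by simpa using hs)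
    exact this (z ^ r) (Multiset.mem_map_of_mem _ hz)
  · intro hz
    calc (T.map (· ^ r)).sum = (T.map (fun _ => (1:ℂ))).sum := by
          apply congrArg Multiset.sum
          exact Multiset.map_congr rfl hz
      _ = (Multiset.card T : ℂ) := by
          simp [Multiset.map_const', Multiset.sum_replicate]

/-- Mapping a periodic function over `Ioc 0 (k*m)` gives `k` copies of the map
over `Ioc 0 m`. -/
lemma aux_block (f : ℕ → ℂ) (m : ℕ) (hf : ∀ r, f (r + m) = f r) (k : ℕ) :
    ((Finset.Ioc 0 (k * m)).val.map f) = k • ((Finset.Ioc 0 m).val.map f) := by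
  induction k with
  | zero => simp
  | succ k ih =>
    have hsplit : (Finset.Ioc 0 ((k+1) * m)).val
        = (Finset.Ioc 0 (k * m)).val + (Finset.Ioc (k * m) (k * m + m)).val := by
      have hd : Disjoint (Finset.Ioc 0 (k * m)).val (Finset.Ioc (k * m) (k * m + m)).val := by
        rw [Multiset.disjoint_left]
        intro a ha ha'
        rw [← Finset.mem_def, Finset.mem_Ioc] at ha ha'
        omega
      have hu : Finset.Ioc 0 (k * m) ∪ Finset.Ioc (k * m) (k * m + m)
          = Finset.Ioc 0 ((k+1) * m) := by
        rw [Finset.Ioc_union_Ioc_eq_Ioc (Nat.zero_le _) (Nat.le_add_right _ _)]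
        ring_nf
      rw [Multiset.add_eq_union_iff_disjoint.mpr hd, ← Finset.union_val, hu]
    have hshift : ∀ j r : ℕ, f (j * m + r) = f r := by
      intro j
      induction j with
      | zero => simp
      | succ j ihj =>
        intro r
        have : (j+1) * m + r = (j * m + r) + m := by ring
        rw [this, hf, ihj]
    have hblock : (Finset.Ioc (k * m) (k * m + m)).val.map f
        = (Finset.Ioc 0 m).val.map f := by
      have : Finset.Ioc (k * m) (k * m + m) = (Finset.Ioc 0 m).map (addLeftEmbedding (k * m)) := by
        rw [Finset.map_add_left_Ioc]; simp
      rw [this, Finset.map_val, Multiset.map_map]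
      apply Multiset.map_congr rfl
      intro x _
      exact hshift k x
    rw [hsplit, Multiset.map_add, ih, hblock, succ_nsmul]

/-- If two same-size multisets of `n`-th roots of unity have equal multisets
of power-sums `{∑ φ^r : 1 ≤ r ≤ n}`, then the lcms of the orders of their
elements agree, and the power-sum multiset consists of `n/m` copies of the
power sums for `1 ≤ r ≤ m`, where `m` is this lcm. -/
theorem lcm_trick (n : ℕ) (hn : 0 < n) (T U : Multiset ℂ)
    (hT : ∀ z ∈ T, z ^ n = 1) (hU : ∀ z ∈ U, z ^ n = 1)
    (hcard : Multiset.card T = Multiset.card U)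
    (h : ((Finset.Icc 1 n).val.map fun r => (T.map (· ^ r)).sum)
       = ((Finset.Icc 1 n).val.map fun r => (U.map (· ^ r)).sum)) :
    (T.map orderOf).lcm = (U.map orderOf).lcm ∧
    ((Finset.Icc 1 n).val.map fun r => (T.map (· ^ r)).sum)
      = (n / (T.map orderOf).lcm) •
          ((Finset.Icc 1 ((T.map orderOf).lcm)).val.map
            fun r => (T.map (· ^ r)).sum) := by
  set m := (T.map orderOf).lcm with hm
  set m' := (U.map orderOf).lcm with hm'
  have hmn : m ∣ n := by
    apply Multiset.lcm_dvd.mpr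
    intro b hb
    obtain ⟨z, hz, rfl⟩ := Multiset.mem_map.mp hb
    exact orderOf_dvd_of_pow_eq_one (hT z hz)
  have hm'n : m' ∣ n := by
    apply Multiset.lcm_dvd.mpr
    intro b hb
    obtain ⟨z, hz, rfl⟩ := Multiset.mem_map.mp hb
    exact orderOf_dvd_of_pow_eq_one (hU z hz)
  have hm0 : 0 < m := Nat.pos_of_dvd_of_pos hmn hn
  have hm'0 : 0 < m' := Nat.pos_of_dvd_of_pos hm'n hn
  -- key characterization
  have keyT : ∀ r : ℕ, (T.map (· ^ r)).sum = (Multiset.card T : ℂ) ↔ m ∣ r := by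
    intro r
    rw [aux_sum_eq_card_iff n hn T hT r]
    constructor
    · intro hall
      apply Multiset.lcm_dvd.mpr
      intro b hb
      obtain ⟨z, hz, rfl⟩ := Multiset.mem_map.mp hb
      exact orderOf_dvd_of_pow_eq_one (hall z hz)
    · intro hdvd z hz
      have : orderOf z ∣ r := dvd_trans (Multiset.dvd_lcm (Multiset.mem_map_of_mem _ hz)) hdvd
      exact orderOf_dvd_iff_pow_eq_one.mp this
  have keyU : ∀ r : ℕ, (U.map (· ^ r)).sum = (Multiset.card U : ℂ) ↔ m' ∣ r := by
    intro r
    rw [aux_sum_eq_card_iff n hn U hU r]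
    constructor
    · intro hall
      apply Multiset.lcm_dvd.mpr
      intro b hb
      obtain ⟨z, hz, rfl⟩ := Multiset.mem_map.mp hb
      exact orderOf_dvd_of_pow_eq_one (hall z hz)
    · intro hdvd z hz
      have : orderOf z ∣ r := dvd_trans (Multiset.dvd_lcm (Multiset.mem_map_of_mem _ hz)) hdvd
      exact orderOf_dvd_iff_pow_eq_one.mp this
  -- counting the value `card T` in the power-sum multisets
  have countT : Multiset.count ((Multiset.card T : ℕ) : ℂ)
      ((Finset.Icc 1 n).val.map fun r => (T.map (· ^ r)).sum) = n / m := by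
    rw [Multiset.count_map]
    have hfil : Multiset.filter (fun r => ((Multiset.card T : ℕ) : ℂ) = (T.map (· ^ r)).sum)
          (Finset.Icc 1 n).val
        = Multiset.filter (fun r => m ∣ r) (Finset.Icc 1 n).val := by
      apply Multiset.filter_congr
      intro r _
      rw [eq_comm, keyT r]
    rw [hfil]
    have : Finset.Icc 1 n = Finset.Ioc 0 n := rfl
    rw [this]
    have := Nat.Ioc_filter_dvd_card_eq_div n m
    simpa [Finset.card, Finset.filter] using this
  have countU : Multiset.count ((Multiset.card T : ℕ) : ℂ)
      ((Finset.Icc 1 n).val.map fun r => (U.map (· ^ r)).sum) = n / m' := by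
    rw [Multiset.count_map]
    have hfil : Multiset.filter (fun r => ((Multiset.card T : ℕ) : ℂ) = (U.map (· ^ r)).sum)
          (Finset.Icc 1 n).val
        = Multiset.filter (fun r => m' ∣ r) (Finset.Icc 1 n).val := by
      apply Multiset.filter_congr
      intro r _
      rw [hcard, eq_comm, keyU r]
    rw [hfil]
    have : Finset.Icc 1 n = Finset.Ioc 0 n := rfl
    rw [this]
    have := Nat.Ioc_filter_dvd_card_eq_div n m'
    simpa [Finset.card, Finset.filter] using this
  have hdiv : n / m = n / m' := by
    rw [← countT, ← countU, h]
  have hmm' : m = m' := by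
    have h1 : n / (n / m) = m := Nat.div_div_self hmn hn.ne'
    have h2 : n / (n / m') = m' := Nat.div_div_self hm'n hn.ne'
    rw [← h1, ← h2, hdiv]
  refine ⟨hmm', ?_⟩
  -- periodicity
  have hper : ∀ r : ℕ, (T.map (· ^ (r + m))).sum = (T.map (· ^ r)).sum := by
    intro r
    apply congrArg Multiset.sum
    apply Multiset.map_congr rfl
    intro z hz
    have hzm : z ^ m = 1 := orderOf_dvd_iff_pow_eq_one.mp
      (Multiset.dvd_lcm (Multiset.mem_map_of_mem _ hz))
    rw [pow_add, hzm, mul_one]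
  have hIcc : Finset.Icc 1 n = Finset.Ioc 0 n := rfl
  have hIccm : Finset.Icc 1 m = Finset.Ioc 0 m := rfl
  rw [hIcc, hIccm]
  have hnm : n = (n / m) * m := (Nat.div_mul_cancel hmn).symm
  calc ((Finset.Ioc 0 n).val.map fun r => (T.map (· ^ r)).sum)
      = ((Finset.Ioc 0 ((n / m) * m)).val.map fun r => (T.map (· ^ r)).sum) := by rw [← hnm]
    _ = (n / m) • ((Finset.Ioc 0 m).val.map fun r => (T.map (· ^ r)).sum) :=
        aux_block _ m hper (n / m)
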